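/- Asymptotics of the one-step risk-neutral variance as the time step vanishes: the function h ↦ (exp(r*h)*exp(μ*h + σ*Real.sqrt h) + exp(r*h)*exp(μ*h − σ*Real.sqrt h) − exp(2*μ*h) − exp(2*r*h)) / h tends to σ^2 as h → 0 from the right (Filter.Tendsto along 𝓝[>] 0 to 𝓝 (σ^2)). Consequently, with T/h steps of size h, the total risk-neutral variance of log(S_T/S_0) converges to T*σ^2, the Black–Scholes–Merton variance, which does not involve the drift μ. -/

import Mathlib

open Real Filter

private lemma slope_lim (f : ℝ → ℝ) (d : ℝ) (h0 : f 0 = 0) (hd : HasDerivAt f d 0) :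
    Filter.Tendsto (fun s => f s / s) (nhdsWithin 0 (Set.Ioi 0)) (nhds d) := by
  rw [hasDerivAt_iff_tendsto_slope] at hd
  have h1 : Filter.Tendsto (slope f 0) (nhdsWithin 0 (Set.Ioi 0)) (nhds d) :=
    hd.mono_left (nhdsWithin_mono _ (fun x hx => ne_of_gt hx))
  refine h1.congr (fun x => ?_)
  simp only [slope_def_field, h0]
  ring

/-- asymptotics of the one-step risk-neutral variance of the binomial
approximation of the BSM model as the time step vanishes: the one-step risk-neutral
variance `R U + R D - U D - R²` divided by the step size `h` tends to `σ²` as `h → 0⁺`,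
independently of the drift `μ`. -/
theorem one_step_risk_neutral_variance_asymptotics
    (μ r σ : ℝ) (hσ : 0 < σ) :
    Filter.Tendsto
      (fun h : ℝ =>
        (Real.exp (r * h) * Real.exp (μ * h + σ * Real.sqrt h)
          + Real.exp (r * h) * Real.exp (μ * h - σ * Real.sqrt h)
          - Real.exp (2 * μ * h) - Real.exp (2 * r * h)) / h)
      (nhdsWithin 0 (Set.Ioi 0)) (nhds (σ ^ 2)) := by
  -- limit of t ↦ (exp(σt)-1)/t
  have hA : Filter.Tendsto (fun t : ℝ => (Real.exp (σ * t) - 1) / t)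
      (nhdsWithin 0 (Set.Ioi 0)) (nhds σ) := by
    apply slope_lim _ _ (by simp)
    have : HasDerivAt (fun t : ℝ => Real.exp (σ * t) - 1) (Real.exp (σ * 0) * σ) 0 :=
      ((Real.hasDerivAt_exp (σ * 0)).comp 0 ((hasDerivAt_id 0).const_mul σ |>.congr_deriv (by ring))).sub_const 1
    simpa using this
  have hB : Filter.Tendsto (fun t : ℝ => (1 - Real.exp (-(σ * t))) / t)
      (nhdsWithin 0 (Set.Ioi 0)) (nhds σ) := by
    apply slope_lim _ _ (by simp)
    have : HasDerivAt (fun t : ℝ => 1 - Real.exp (-(σ * t))) (-(Real.exp (-(σ * 0)) * (-σ))) 0 :=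
      by
        have h0 : HasDerivAt (fun t : ℝ => -(σ * t)) (-σ) 0 :=
          ((hasDerivAt_id 0).const_mul σ).neg.congr_deriv (by ring)
        exact h0.exp.const_sub 1
    simpa using this
  -- second piece in variable s
  have hC0 : Filter.Tendsto (fun s : ℝ =>
      (2 * Real.exp ((r + μ) * s) - Real.exp (2 * μ * s) - Real.exp (2 * r * s)) / s)
      (nhdsWithin 0 (Set.Ioi 0)) (nhds 0) := by
    apply slope_lim _ _ (by simp; ring)
    have h1 : HasDerivAt (fun s : ℝ => Real.exp ((r + μ) * s)) (r + μ) 0 := by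
      have := ((hasDerivAt_id 0).const_mul (r + μ)).exp
      simpa using this
    have h2 : HasDerivAt (fun s : ℝ => Real.exp (2 * μ * s)) (2 * μ) 0 := by
      have := ((hasDerivAt_id 0).const_mul (2 * μ)).exp
      simpa using this
    have h3 : HasDerivAt (fun s : ℝ => Real.exp (2 * r * s)) (2 * r) 0 := by
      have := ((hasDerivAt_id 0).const_mul (2 * r)).exp
      simpa using this
    have : HasDerivAt (fun s : ℝ => 2 * Real.exp ((r + μ) * s) - Real.exp (2 * μ * s) - Real.exp (2 * r * s))
        (2 * (r + μ) - 2 * μ - 2 * r) 0 := ((h1.const_mul 2).sub h2).sub h3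
    convert this using 1
    ring
  -- t ↦ t² maps 𝓝[>]0 to 𝓝[>]0
  have hsq : Filter.Tendsto (fun t : ℝ => t ^ 2) (nhdsWithin 0 (Set.Ioi 0)) (nhdsWithin 0 (Set.Ioi 0)) := by
    apply tendsto_nhdsWithin_of_tendsto_nhds_of_eventually_within
    · have : Filter.Tendsto (fun t : ℝ => t ^ 2) (nhds 0) (nhds ((0:ℝ) ^ 2)) :=
        (continuous_pow 2).tendsto 0
      simpa using this.mono_left nhdsWithin_le_nhds
    · filter_upwards [self_mem_nhdsWithin] with x hx
      exact pow_pos (Set.mem_Ioi.mp hx) 2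
  have hC : Filter.Tendsto (fun t : ℝ =>
      (2 * Real.exp ((r + μ) * t ^ 2) - Real.exp (2 * μ * t ^ 2) - Real.exp (2 * r * t ^ 2)) / t ^ 2)
      (nhdsWithin 0 (Set.Ioi 0)) (nhds 0) := hC0.comp hsq
  have hE : Filter.Tendsto (fun t : ℝ => Real.exp ((r + μ) * t ^ 2))
      (nhdsWithin 0 (Set.Ioi 0)) (nhds 1) := by
    have : Continuous (fun t : ℝ => Real.exp ((r + μ) * t ^ 2)) := by continuity
    simpa using (this.tendsto 0).mono_left nhdsWithin_le_nhds
  -- combined limit in t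
  have key : Filter.Tendsto (fun t : ℝ =>
      (Real.exp ((r + μ) * t ^ 2) * (Real.exp (σ * t) + Real.exp (-(σ * t)))
        - Real.exp (2 * μ * t ^ 2) - Real.exp (2 * r * t ^ 2)) / t ^ 2)
      (nhdsWithin 0 (Set.Ioi 0)) (nhds (σ ^ 2)) := by
    have comb : Filter.Tendsto (fun t : ℝ =>
        Real.exp ((r + μ) * t ^ 2) * ((Real.exp (σ * t) - 1) / t) * ((1 - Real.exp (-(σ * t))) / t)
        + (2 * Real.exp ((r + μ) * t ^ 2) - Real.exp (2 * μ * t ^ 2) - Real.exp (2 * r * t ^ 2)) / t ^ 2)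
        (nhdsWithin 0 (Set.Ioi 0)) (nhds (1 * σ * σ + 0)) :=
      ((hE.mul hA).mul hB).add hC
    have : (1 : ℝ) * σ * σ + 0 = σ ^ 2 := by ring
    rw [this] at comb
    refine comb.congr' ?_
    filter_upwards [self_mem_nhdsWithin] with t ht
    have htne : t ≠ 0 := ne_of_gt ht
    have hexp : Real.exp (σ * t) * Real.exp (-(σ * t)) = 1 := by
      rw [← Real.exp_add]; simp
    have h1 : Real.exp ((r + μ) * t ^ 2) * ((Real.exp (σ * t) - 1) / t) * ((1 - Real.exp (-(σ * t))) / t)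
        = Real.exp ((r + μ) * t ^ 2) * ((Real.exp (σ * t) - 1) * (1 - Real.exp (-(σ * t)))) / t ^ 2 := by
      field_simp
    have h2 : (Real.exp (σ * t) - 1) * (1 - Real.exp (-(σ * t)))
        = Real.exp (σ * t) + Real.exp (-(σ * t)) - 2 := by
      linear_combination -hexp
    rw [h1, h2]
    ring
  -- pull back via sqrt
  have hst : Filter.Tendsto Real.sqrt (nhdsWithin 0 (Set.Ioi 0)) (nhdsWithin 0 (Set.Ioi 0)) := by
    apply tendsto_nhdsWithin_of_tendsto_nhds_of_eventually_within
    · simpa using (Real.continuous_sqrt.tendsto 0).mono_left nhdsWithin_le_nhds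
    · filter_upwards [self_mem_nhdsWithin] with x hx
      exact Real.sqrt_pos.2 hx
  have := key.comp hst
  refine this.congr' ?_
  filter_upwards [self_mem_nhdsWithin] with h hh
  have hs : Real.sqrt h ^ 2 = h := Real.sq_sqrt (le_of_lt hh)
  simp only [Function.comp_apply, hs, mul_add, ← Real.exp_add]
  ring_nf
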